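/- For every t > 0 and k ∈ ℕ: (k!(n-1)!/(k+n-1)!) ∫_{ℝ^{2n}} p^λ_{2t}(2y,2v) φ^{n-1}_{k,λ}(2y,2v) dy dv = c_λ e^{-2t(2k+n)|λ|}, with c_λ depending only on λ and n. -/

import Mathlib

open MeasureTheory Complex

noncomputable section

/-- The special Hermite heat kernel
`p^λ_t(x,u) = (4π)^{-n} λ^n (sinh tλ)^{-n} e^{-(λ/4)(coth tλ)(|x|²+|u|²)}`. -/
def twistedHeatKernelR {n : ℕ} (lam t : ℝ)
    (p : (Fin n → ℝ) × (Fin n → ℝ)) : ℝ :=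
  (4 * Real.pi) ^ (-(n : ℤ)) * lam ^ n * (Real.sinh (t * lam)) ^ (-(n : ℤ)) *
    Real.exp (-(lam / 4) * (Real.cosh (t * lam) / Real.sinh (t * lam)) *
      ((∑ j, (p.1 j) ^ 2) + ∑ j, (p.2 j) ^ 2))

/-- The generalized Laguerre polynomial `L_k^a(x)`. -/
def laguerre (a k : ℕ) (x : ℝ) : ℝ :=
  ∑ i ∈ Finset.range (k + 1),
    (-1 : ℝ) ^ i * ((k + a).choose (k - i)) * x ^ i / (i.factorial)

section Aux
open MeasureTheory Finset Set


lemma nat_choose_id (m k i : ℕ) (h : i ≤ k) :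
    (k+m).choose (k-i) * (m+i).factorial * k.factorial
      = (k+m).factorial * (k.choose i * i.factorial) := by
  have h1 : (k+m).choose (k-i) * (k-i).factorial * (m+i).factorial = (k+m).factorial := by
    have := Nat.choose_mul_factorial_mul_factorial (show k - i ≤ k + m by omega)
    rwa [show k + m - (k - i) = m + i by omega] at this
  have h2 : k.choose i * i.factorial * (k-i).factorial = k.factorial :=
    Nat.choose_mul_factorial_mul_factorial h
  apply Nat.eq_of_mul_eq_mul_right (Nat.factorial_pos (k-i))
  calc (k+m).choose (k-i) * (m+i).factorial * k.factorial * (k-i).factorial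
      = ((k+m).choose (k-i) * (k-i).factorial * (m+i).factorial) * k.factorial := by ring
    _ = (k+m).factorial * k.factorial := by rw [h1]
    _ = (k+m).factorial * (k.choose i * i.factorial * (k-i).factorial) := by rw [h2]
    _ = (k+m).factorial * (k.choose i * i.factorial) * (k-i).factorial := by ring

lemma coeff_id (m k i : ℕ) (h : i ≤ k) :
    ((k+m).choose (k-i) : ℝ) * (m+i).factorial / i.factorial
      = ((k+m).factorial / k.factorial) * (k.choose i) := by
  have H : ((k+m).choose (k-i) : ℝ) * (m+i).factorial * k.factorial
      = (k+m).factorial * ((k.choose i) * i.factorial) := by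
    exact_mod_cast congrArg (Nat.cast : ℕ → ℝ) (nat_choose_id m k i h)
  have hi : (i.factorial : ℝ) ≠ 0 := Nat.cast_ne_zero.2 (Nat.factorial_ne_zero i)
  have hk : (k.factorial : ℝ) ≠ 0 := Nat.cast_ne_zero.2 (Nat.factorial_ne_zero k)
  field_simp
  linear_combination H

lemma sum_id (m k : ℕ) {a : ℝ} (ha : a ≠ 0) (b : ℝ) :
    ∑ i ∈ Finset.range (k+1), (-1:ℝ)^i * ((k+m).choose (k-i)) * b^i / i.factorial
        * ((m+i).factorial / a^(m+1+i))
    = ((k+m).factorial / k.factorial) * (a-b)^k / a^(m+1+k) := by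
  have hrefl := Finset.sum_range_reflect
      (fun j => a^j * (-b)^(k-j) * (k.choose j : ℝ)) (k+1)
  have hpow : (a - b)^k = ∑ i ∈ Finset.range (k+1),
      a^(k-i) * (-b)^(k-(k-i)) * (k.choose (k-i) : ℝ) := by
    rw [sub_eq_add_neg, add_pow, ← hrefl]
    exact Finset.sum_congr rfl fun i hi => by
      have : i ≤ k := Nat.lt_succ_iff.mp (Finset.mem_range.mp hi)
      congr 1 <;> congr 1 <;> omega
  rw [hpow, Finset.mul_sum, Finset.sum_div]
  refine Finset.sum_congr rfl fun i hi => ?_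
  have hik : i ≤ k := Nat.lt_succ_iff.mp (Finset.mem_range.mp hi)
  have h1 : k - (k - i) = i := by omega
  have h2 : k.choose (k-i) = k.choose i := by rw [Nat.choose_symm hik]
  have h3 : a^(m+1+k) = a^(m+1+i) * a^(k-i) := by
    rw [← pow_add]; congr 1; omega
  rw [h1, h2, h3]
  have hC := coeff_id m k i hik
  have hi' : (i.factorial : ℝ) ≠ 0 := Nat.cast_ne_zero.2 (Nat.factorial_ne_zero i)
  have hk' : (k.factorial : ℝ) ≠ 0 := Nat.cast_ne_zero.2 (Nat.factorial_ne_zero k)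
  have hai : a^(m+1+i) ≠ 0 := pow_ne_zero _ ha
  have haki : a^(k-i) ≠ 0 := pow_ne_zero _ ha
  rw [neg_pow b i]
  have hCc : ((k+m).choose (k-i) : ℝ) * (m+i).factorial * k.factorial
      = (k+m).factorial * (k.choose i) * i.factorial := by
    field_simp at hC; linear_combination hC
  field_simp
  linear_combination b^i * hCc

lemma gauss_moment (N : ℕ) {a : ℝ} (ha : 0 < a) :
    ∫ y in Ioi (0:ℝ), y ^ (2*N+1) * Real.exp (-a * y^2)
      = (1/2) * N.factorial / a^(N+1) := by
  have h1 : ∀ y ∈ Ioi (0:ℝ), y ^ (2*N+1) * Real.exp (-a * y^2)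
      = y ^ ((2*N+1 : ℕ) : ℝ) * Real.exp (-a * y ^ (2:ℝ)) := by
    intro y hy
    rw [Real.rpow_natCast, Real.rpow_two]
  rw [setIntegral_congr_fun measurableSet_Ioi h1,
    integral_rpow_mul_exp_neg_mul_rpow two_pos (by have : (0:ℝ) ≤ (N:ℝ) := Nat.cast_nonneg N; push_cast; linarith : (-1:ℝ) < ((2*N+1 : ℕ):ℝ)) ha]
  have h2 : (((2*N+1 : ℕ):ℝ) + 1) / 2 = ((N+1 : ℕ) : ℝ) := by push_cast; ring
  rw [show (-(((2*N+1 : ℕ):ℝ) + 1) / 2) = -(((N+1:ℕ):ℝ)) by rw [neg_div, h2], h2,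
    Real.rpow_neg ha.le, Real.rpow_natCast,
    show ((N+1:ℕ):ℝ) = (N:ℝ)+1 by push_cast; ring, Real.Gamma_nat_eq_factorial]
  have h3 : a ^ (N+1) ≠ 0 := pow_ne_zero _ ha.ne'
  field_simp
  try ring
  try simp

lemma int1d (m k : ℕ) {a : ℝ} (ha : 0 < a) (b : ℝ) :
    ∫ y in Ioi (0:ℝ), y ^ (m+m+1) * (laguerre m k (b * y^2) * Real.exp (-a * y^2))
    = ∑ i ∈ Finset.range (k+1), (-1:ℝ)^i * ((k+m).choose (k-i)) * b^i / i.factorial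
        * ((1/2) * (m+i).factorial / a^(m+1+i)) := by
  have hpt : ∀ y ∈ Ioi (0:ℝ), y ^ (m+m+1) * (laguerre m k (b * y^2) * Real.exp (-a * y^2))
      = ∑ i ∈ Finset.range (k+1),
          ((-1:ℝ)^i * ((k+m).choose (k-i)) * b^i / i.factorial)
            * (y ^ (2*(m+i)+1) * Real.exp (-a * y^2)) := by
    intro y _
    rw [laguerre, Finset.sum_mul, Finset.mul_sum]
    refine Finset.sum_congr rfl fun i _ => ?_
    have hyy : (y^2)^i = y^(i+i) := by rw [← pow_mul]; congr 1; ring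
    rw [mul_pow, show 2*(m+i)+1 = (m+m+1) + (i+i) by ring, pow_add, hyy]
    ring
  rw [setIntegral_congr_fun measurableSet_Ioi hpt, integral_finset_sum]
  · refine Finset.sum_congr rfl fun i _ => ?_
    rw [MeasureTheory.integral_const_mul, show 2*(m+i)+1 = 2*(m+i)+1 from rfl, gauss_moment (m+i) ha,
      show m+i+1 = m+1+i by ring]
  · intro i _
    apply Integrable.const_mul
    have := integrableOn_rpow_mul_exp_neg_mul_sq ha
      (show (-1:ℝ) < ((2*(m+i)+1 : ℕ):ℝ) by have : (0:ℝ) ≤ ((m+i:ℕ):ℝ) := Nat.cast_nonneg _; push_cast at this ⊢; linarith)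
    refine this.congr_fun (fun y hy => ?_) measurableSet_Ioi
    beta_reduce
    rw [Real.rpow_natCast]

lemma transfer (n : ℕ) (f : ℝ → ℝ) :
    (∫ q : (Fin n → ℝ) × (Fin n → ℝ),
        f (Real.sqrt ((∑ j, (q.1 j)^2) + ∑ j, (q.2 j)^2)))
    = ∫ x : EuclideanSpace ℝ (Fin (n+n)), f ‖x‖ := by
  let e₁ := (MeasurableEquiv.toLp 2 (Fin (n+n) → ℝ)).symm
  let e₂ := MeasurableEquiv.piCongrLeft (fun _ : Fin n ⊕ Fin n => ℝ) finSumFinEquiv.symm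
  let e₃ := MeasurableEquiv.sumPiEquivProdPi (fun _ : Fin n ⊕ Fin n => ℝ)
  have h₁ : MeasurePreserving e₁ volume volume :=
    EuclideanSpace.volume_preserving_symm_measurableEquiv_toLp _
  have h₂ : MeasurePreserving e₂ volume volume :=
    volume_measurePreserving_piCongrLeft _ _
  have h₃ : MeasurePreserving e₃ volume volume :=
    volume_measurePreserving_sumPiEquivProdPi _
  have hΦ : MeasurePreserving (fun x => e₃ (e₂ (e₁ x))) volume volume :=
    (h₃.comp h₂).comp h₁
  have hemb : MeasurableEmbedding (fun x : EuclideanSpace ℝ (Fin (n+n)) => e₃ (e₂ (e₁ x))) :=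
    (e₁.trans (e₂.trans e₃)).measurableEmbedding
  rw [← hΦ.integral_comp hemb]
  refine integral_congr_ae (Filter.Eventually.of_forall fun x => ?_)
  have hco : ∀ s : Fin n ⊕ Fin n, e₂ (e₁ x) s = x (finSumFinEquiv s) := by
    intro s
    show (MeasurableEquiv.piCongrLeft (fun _ : Fin n ⊕ Fin n => ℝ) finSumFinEquiv.symm)
        (e₁ x) s = x (finSumFinEquiv s)
    simp [MeasurableEquiv.piCongrLeft, Equiv.piCongrLeft, Equiv.piCongrLeft',
      MeasurableEquiv.coe_mk, e₁]
  have h1 : (e₃ (e₂ (e₁ x))).1 = fun j => x (finSumFinEquiv (Sum.inl j)) := by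
    funext j; exact hco (Sum.inl j)
  have h2 : (e₃ (e₂ (e₁ x))).2 = fun j => x (finSumFinEquiv (Sum.inr j)) := by
    funext j; exact hco (Sum.inr j)
  beta_reduce
  rw [h1, h2]
  have hnorm : ‖x‖ = Real.sqrt (∑ i, (x i)^2) := by
    rw [EuclideanSpace.norm_eq]
    congr 1
    exact Finset.sum_congr rfl fun i _ => by rw [Real.norm_eq_abs, _root_.sq_abs]
  rw [hnorm]
  congr 2
  simp only [finSumFinEquiv_apply_left, finSumFinEquiv_apply_right]
  exact (Fin.sum_univ_add (fun i => (x i)^2)).symm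

lemma radial (n : ℕ) (hn : 0 < n) (f : ℝ → ℝ) :
    (∫ q : (Fin n → ℝ) × (Fin n → ℝ),
        f (Real.sqrt ((∑ j, (q.1 j)^2) + ∑ j, (q.2 j)^2)))
    = ((n+n : ℕ) : ℝ) * (volume (Metric.ball (0 : EuclideanSpace ℝ (Fin (n+n))) 1)).toReal
        * ∫ y in Ioi (0:ℝ), y ^ (n+n-1) * f y := by
  rw [transfer n f]
  haveI : Nonempty (Fin (n+n)) := ⟨⟨0, by omega⟩⟩
  haveI : Nontrivial (EuclideanSpace ℝ (Fin (n+n))) :=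
    inferInstance
  rw [integral_fun_norm_addHaar (volume : Measure (EuclideanSpace ℝ (Fin (n+n)))) f]
  rw [finrank_euclideanSpace, Fintype.card_fin]
  rw [nsmul_eq_mul, smul_eq_mul]
  rw [mul_assoc]
  simp only [smul_eq_mul]
  rfl

end Aux

open MeasureTheory Set in
/-- the real-argument Laguerre integral identity
`(k!(n-1)!/(k+n-1)!) ∫ p^λ_{2t}(2y,2v) φ^{n-1}_{k,λ}(2y,2v) dy dv
  = c_λ e^{-2t(2k+n)|λ|}`, where
`φ^{n-1}_{k,λ}(x,u) = L_k^{n-1}((|λ|/2)(|x|²+|u|²)) e^{-(|λ|/4)(|x|²+|u|²)}`. -/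
theorem laguerre_real_integral_identity
    {n : ℕ} (hn : 0 < n) (lam : ℝ) (hlam : lam ≠ 0) :
    ∃ c : ℝ, ∀ (t : ℝ), 0 < t → ∀ k : ℕ,
      ((k.factorial : ℝ) * ((n - 1).factorial : ℝ) / ((k + n - 1).factorial : ℝ)) *
        ∫ q : (Fin n → ℝ) × (Fin n → ℝ),
          twistedHeatKernelR lam (2 * t) (fun j => 2 * q.1 j, fun j => 2 * q.2 j) *
            (laguerre (n - 1) k
                (|lam| / 2 * ((∑ j, (2 * q.1 j) ^ 2) + ∑ j, (2 * q.2 j) ^ 2)) *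
              Real.exp (-(|lam| / 4) * ((∑ j, (2 * q.1 j) ^ 2) + ∑ j, (2 * q.2 j) ^ 2))) =
      c * Real.exp (-(2 * t) * (2 * k + n) * |lam|) := by
  obtain ⟨m, rfl⟩ : ∃ m, n = m + 1 := ⟨n - 1, by omega⟩
  set N : ℕ := m + 1 with hN
  set V : ℝ :=
    (volume (Metric.ball (0 : EuclideanSpace ℝ (Fin (N+N))) 1)).toReal with hV
  set P4 : ℝ := (4 * Real.pi) ^ (-(N : ℤ)) with hP4
  refine ⟨((N+N : ℕ) : ℝ) * V * (1/2) * (m.factorial : ℝ) * P4, ?_⟩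
  intro t ht k
  set μ : ℝ := |lam| with hμ
  have hμ0 : 0 < μ := abs_pos.mpr hlam
  set u : ℝ := 2 * t * μ with hud
  have hu0 : 0 < u := by positivity
  set s : ℝ := Real.sinh u with hsd
  have hs0 : 0 < s := Real.sinh_pos_iff.mpr hu0
  set eu : ℝ := Real.exp u with heud
  have heu0 : 0 < eu := Real.exp_pos u
  set a : ℝ := μ * eu / s with had
  have ha0 : 0 < a := by positivity
  set b : ℝ := 2 * μ with hbd
  set C₀ : ℝ := P4 * lam ^ N * (Real.sinh (2 * t * lam)) ^ (-(N : ℤ)) with hC₀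
  -- sign identities
  have hsinh : lam ^ N * (Real.sinh (2 * t * lam)) ^ (-(N : ℤ))
      = μ ^ N * (s ^ N)⁻¹ := by
    rw [zpow_neg, zpow_natCast]
    rcases lt_or_gt_of_ne hlam with hneg | hpos
    · have h1 : μ = -lam := abs_of_neg hneg
      have h2 : Real.sinh (2 * t * lam) = -s := by
        rw [hsd, hud, h1, show 2 * t * -lam = -(2 * t * lam) by ring, Real.sinh_neg, neg_neg]
      rw [h1, h2, neg_pow s, neg_pow lam, mul_inv]
      have hm1 : ((-1:ℝ) ^ N)⁻¹ = (-1:ℝ) ^ N := by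
        rcases Nat.even_or_odd N with h | h
        · rw [h.neg_one_pow]; norm_num
        · rw [h.neg_one_pow]; norm_num
      rw [hm1]
      have h3 : ((-1:ℝ)^N) * ((-1:ℝ)^N) = 1 := by
        rw [← pow_add]; exact Even.neg_one_pow ⟨N, rfl⟩
      calc lam ^ N * ((-1:ℝ)^N * (s ^ N)⁻¹)
          = ((-1:ℝ)^N * (-1:ℝ)^N) * (lam ^ N * ((-1:ℝ)^N * (s ^ N)⁻¹)) := by rw [h3]; ring
        _ = (-1:ℝ)^N * lam ^ N * (s^N)⁻¹ * ((-1:ℝ)^N * (-1:ℝ)^N) := by ring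
        _ = (-1:ℝ)^N * lam ^ N * (s^N)⁻¹ := by rw [h3]; ring
    · have h1 : μ = lam := abs_of_pos hpos
      rw [hsd, hud, h1]
  have hcs : lam * (Real.cosh (2 * t * lam) / Real.sinh (2 * t * lam))
      = μ * (Real.cosh u / s) := by
    rcases lt_or_gt_of_ne hlam with hneg | hpos
    · have h1 : μ = -lam := abs_of_neg hneg
      have h2 : Real.sinh (2 * t * lam) = -s := by
        rw [hsd, hud, h1, show 2 * t * -lam = -(2 * t * lam) by ring, Real.sinh_neg, neg_neg]
      have h3 : Real.cosh (2 * t * lam) = Real.cosh u := by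
        rw [hud, h1, show 2 * t * -lam = -(2 * t * lam) by ring, Real.cosh_neg]
      rw [h1, h2, h3]; ring
    · have h1 : μ = lam := abs_of_pos hpos
      rw [hsd, hud, h1]
  have hkey : lam * (Real.cosh (2 * t * lam) / Real.sinh (2 * t * lam)) + μ = a := by
    rw [hcs, had]
    have : Real.cosh u + s = eu := by rw [hsd, heud]; exact Real.cosh_add_sinh u
    field_simp
    linear_combination this
  -- the pointwise identity
  have hpoint : ∀ q : (Fin N → ℝ) × (Fin N → ℝ),
      twistedHeatKernelR lam (2 * t) (fun j => 2 * q.1 j, fun j => 2 * q.2 j) *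
          (laguerre (N - 1) k
              (|lam| / 2 * ((∑ j, (2 * q.1 j) ^ 2) + ∑ j, (2 * q.2 j) ^ 2)) *
            Real.exp (-(|lam| / 4) * ((∑ j, (2 * q.1 j) ^ 2) + ∑ j, (2 * q.2 j) ^ 2)))
      = C₀ * (laguerre m k
            (b * (Real.sqrt ((∑ j, (q.1 j)^2) + ∑ j, (q.2 j)^2))^2) *
          Real.exp (-a * (Real.sqrt ((∑ j, (q.1 j)^2) + ∑ j, (q.2 j)^2))^2)) := by
    intro q
    have hA1 : (∑ j, (2 * q.1 j) ^ 2) = 4 * ∑ j, (q.1 j)^2 := by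
      rw [Finset.mul_sum]; exact Finset.sum_congr rfl fun j _ => by ring
    have hA2 : (∑ j, (2 * q.2 j) ^ 2) = 4 * ∑ j, (q.2 j)^2 := by
      rw [Finset.mul_sum]; exact Finset.sum_congr rfl fun j _ => by ring
    have hRR : (Real.sqrt ((∑ j, (q.1 j)^2) + ∑ j, (q.2 j)^2))^2
        = (∑ j, (q.1 j)^2) + ∑ j, (q.2 j)^2 :=
      Real.sq_sqrt (by positivity)
    rw [twistedHeatKernelR, hRR]
    simp only [hA1, hA2]
    rw [hC₀]
    set T : ℝ := (∑ j, (q.1 j)^2) + ∑ j, (q.2 j)^2 with hT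
    have hlag : |lam| / 2 * (4 * (∑ j, (q.1 j)^2) + 4 * ∑ j, (q.2 j)^2) = b * T := by
      rw [hbd, hμ, hT]; ring
    rw [← hμ, ← hP4]
    have h4T : (4 * ∑ j, (q.1 j)^2 + 4 * ∑ j, (q.2 j)^2 : ℝ) = 4 * T := by rw [hT]; ring
    rw [h4T, show μ / 2 * (4 * T) = b * T by rw [hbd]; ring,
      show N - 1 = m from rfl]
    have hE : Real.exp (-(lam / 4) * (Real.cosh (2 * t * lam) / Real.sinh (2 * t * lam)) *
          (4 * T)) * Real.exp (-(μ / 4) * (4 * T)) = Real.exp (-a * T) := by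
      rw [← Real.exp_add]
      congr 1
      linear_combination (-T) * hkey
    calc P4 * lam ^ N * Real.sinh (2 * t * lam) ^ (-(N:ℤ)) *
          Real.exp (-(lam / 4) * (Real.cosh (2 * t * lam) / Real.sinh (2 * t * lam)) * (4 * T)) *
          (laguerre m k (b * T) * Real.exp (-(μ / 4) * (4 * T)))
        = P4 * lam ^ N * Real.sinh (2 * t * lam) ^ (-(N:ℤ)) *
          (laguerre m k (b * T) *
            (Real.exp (-(lam / 4) * (Real.cosh (2 * t * lam) / Real.sinh (2 * t * lam)) * (4 * T)) *
             Real.exp (-(μ / 4) * (4 * T)))) := by ring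
      _ = P4 * lam ^ N * Real.sinh (2 * t * lam) ^ (-(N:ℤ)) *
          (laguerre m k (b * T) * Real.exp (-a * T)) := by rw [hE]
      _ = C₀ * (laguerre m k (b * T) * Real.exp (-a * T)) := by rw [hC₀]
  -- rewrite the integral
  rw [integral_congr_ae (Filter.Eventually.of_forall hpoint), MeasureTheory.integral_const_mul]
  have hrad := radial N hn (fun r => laguerre m k (b * r^2) * Real.exp (-a * r^2))
  beta_reduce at hrad
  rw [hrad, show N + N - 1 = m + m + 1 from by omega, int1d m k ha0 b]
  have hhalf : ∑ i ∈ Finset.range (k+1), (-1:ℝ)^i * ((k+m).choose (k-i)) * b^i / i.factorial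
        * ((1/2) * (m+i).factorial / a^(m+1+i))
      = (1/2) * (((k+m).factorial : ℝ) / k.factorial * (a-b)^k / a^(m+1+k)) := by
    rw [← sum_id m k ha0.ne' b, Finset.mul_sum]
    exact Finset.sum_congr rfl fun i _ => by ring
  rw [hhalf]
  -- final algebra
  have hC : C₀ = P4 * (μ ^ N * (s ^ N)⁻¹) := by rw [hC₀, mul_assoc, hsinh]
  have h2s : 2 * s = eu - eu⁻¹ := by
    rw [hsd, heud, Real.sinh_eq, Real.exp_neg]; ring
  have hab : a - b = μ * eu⁻¹ / s := by
    have h1 : μ * eu - b * s = μ * eu⁻¹ := by rw [hbd]; linear_combination (-μ) * h2s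
    rw [had, eq_div_iff hs0.ne', sub_mul, div_mul_cancel₀ _ hs0.ne', h1]
  have hexp2 : Real.exp (-(2 * t) * (2 * (k:ℝ) + (N:ℕ)) * |lam|) = (eu⁻¹)^(2*k+N) := by
    rw [← hμ, show -(2 * t) * (2 * (k:ℝ) + (N:ℕ)) * μ = ((2*k+N : ℕ):ℝ) * (-u) by
      rw [hud]; push_cast; ring, Real.exp_nat_mul, Real.exp_neg, heud]
  rw [hexp2, hC, hab, had,
    show N - 1 = m from rfl, show k + N - 1 = k + m from by omega]
  have hk' : (k.factorial : ℝ) ≠ 0 := Nat.cast_ne_zero.2 (Nat.factorial_ne_zero k)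
  have hkm' : ((k+m).factorial : ℝ) ≠ 0 := Nat.cast_ne_zero.2 (Nat.factorial_ne_zero _)
  rw [hN]
  have hs' : s ≠ 0 := hs0.ne'
  have heu' : eu ≠ 0 := heu0.ne'
  simp only [hV]
  field_simp
  rw [div_pow, div_pow, div_pow, mul_pow, mul_pow, one_pow]
  field_simp
  ring
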